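/- Let D be a strongly connected oriented graph with no induced TT3 and no induced P⁺(2,1). If D contains an induced odd cycle of length at least 7, then D is an extension of that cycle; in particular χ(D) = 3. -/

import Mathlib

/-- The underlying simple graph of a digraph given by its arc relation. -/
def underlying {V : Type*} (A : V → V → Prop) : SimpleGraph V where
  Adj x y := x ≠ y ∧ (A x y ∨ A y x)
  symm := by constructor; intro x y h; exact ⟨h.1.symm, h.2.symm⟩
  loopless := by constructor; intro x h; exact h.1 rfl

section Aux

variable {V : Type*} {q : ℕ} (A : V → V → Prop) (v : ZMod q → V)

/-- Bundle of hypotheses for the "directed cycle" normalized situation. -/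
structure Ctx : Prop where
  hasym : ∀ x y, A x y → ¬ A y x
  hstrong : ∀ x y : V, Relation.ReflTransGen A x y
  hTT3 : ¬ ∃ u v w : V, A u v ∧ A v w ∧ A u w
  hP21 : ¬ ∃ a b c d : V, A a b ∧ A b c ∧ A d c ∧
      ¬ (underlying A).Adj a c ∧ ¬ (underlying A).Adj a d ∧
      ¬ (underlying A).Adj b d
  hq7 : 7 ≤ q
  hodd : Odd q
  hinj : Function.Injective v
  harc : ∀ i : ZMod q, A (v i) (v (i + 1))
  hind : ∀ i j : ZMod q, j ≠ i + 1 → i ≠ j + 1 → i ≠ j →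
      ¬ (underlying A).Adj (v i) (v j)

namespace Ctx

variable {A} {v} (C : Ctx A v)
include C

lemma nezero : NeZero q := ⟨by have := C.hq7; omega⟩

lemma nzn (k : ℕ) (h0 : 0 < k) (h7 : k < 7) : ((k : ℕ) : ZMod q) ≠ 0 := by
  haveI := C.nezero
  intro h
  have hd := (ZMod.natCast_eq_zero_iff k q).mp h
  have := Nat.le_of_dvd h0 hd
  have := C.hq7
  omega

lemma nz1 : (1 : ZMod q) ≠ 0 := by exact_mod_cast C.nzn 1 (by norm_num) (by norm_num)
lemma nz2 : (2 : ZMod q) ≠ 0 := by exact_mod_cast C.nzn 2 (by norm_num) (by norm_num)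
lemma nz3 : (3 : ZMod q) ≠ 0 := by exact_mod_cast C.nzn 3 (by norm_num) (by norm_num)
lemma nz4 : (4 : ZMod q) ≠ 0 := by exact_mod_cast C.nzn 4 (by norm_num) (by norm_num)
lemma nz5 : (5 : ZMod q) ≠ 0 := by exact_mod_cast C.nzn 5 (by norm_num) (by norm_num)
lemma nz6 : (6 : ZMod q) ≠ 0 := by exact_mod_cast C.nzn 6 (by norm_num) (by norm_num)

lemma harc' (i j : ZMod q) (h : j = i + 1) : A (v i) (v j) := h ▸ C.harc i

lemma t1 (x : V) (j k : ZMod q) (h : k = j + 1) (h1 : A x (v j)) (h2 : A x (v k)) : False :=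
  C.hTT3 ⟨x, v j, v k, h1, C.harc' j k h, h2⟩

lemma t2 (x : V) (j k : ZMod q) (h : k = j + 1) (h1 : A (v j) x) (h2 : A (v k) x) : False :=
  C.hTT3 ⟨v j, v k, x, C.harc' j k h, h2, h1⟩

lemma t3 (x : V) (j k : ZMod q) (h : k = j + 1) (h1 : A (v j) x) (h2 : A x (v k)) : False :=
  C.hTT3 ⟨v j, x, v k, h1, h2, C.harc' j k h⟩

lemma hp' (a b c d : V) (h1 : A a b) (h2 : A b c) (h3 : A d c) :
    (underlying A).Adj a c ∨ (underlying A).Adj a d ∨ (underlying A).Adj b d := by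
  by_contra h
  push_neg at h
  exact C.hP21 ⟨a, b, c, d, h1, h2, h3, h.1, h.2.1, h.2.2⟩

lemma adj_vv (i j : ZMod q) (h : (underlying A).Adj (v i) (v j)) : j = i + 1 ∨ i = j + 1 := by
  by_contra hc
  push_neg at hc
  exact C.hind i j hc.1 hc.2 (fun e => h.ne (congrArg v e)) h

lemma descent (x : V) (i0 : ZMod q) (h0 : A x (v i0)) :
    ∃ j, A x (v j) ∧ A (v (j - 2)) x := by
  by_contra hno
  push_neg at hno
  have step : ∀ j, A x (v j) → A x (v (j - 2)) := by
    intro j hj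
    rcases C.hp' (v (j - 2)) (v (j - 1)) (v j) x (C.harc' _ _ (by ring)) (C.harc' _ _ (by ring))
        hj with hadj | hadj | hadj
    · rcases C.adj_vv _ _ hadj with hh | hh
      · exact absurd (by linear_combination hh) C.nz1
      · exact absurd (by linear_combination -hh) C.nz3
    · rcases hadj.2 with h | h
      · exact absurd h (hno j hj)
      · exact h
    · exfalso
      rcases hadj.2 with h | h
      · exact C.t3 x (j - 1) j (by ring) h hj
      · exact C.t1 x (j - 1) j (by ring) h hj
  have all : ∀ n : ℕ, A x (v (i0 - 2 * n)) := by
    intro n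
    induction n with
    | zero => simpa using h0
    | succ n ih =>
      have h2 := step _ ih
      convert h2 using 2
      push_cast
      ring
  haveI := C.nezero
  obtain ⟨t, ht⟩ := C.hodd
  have allz : ∀ z : ZMod q, A x (v z) := by
    intro z
    have h2c : (2 : ZMod q) * (((t + 1 : ℕ) : ZMod q) * (i0 - z)) = i0 - z := by
      have he : ((2 * (t + 1) : ℕ) : ZMod q) = ((q + 1 : ℕ) : ZMod q) := by
        rw [show 2 * (t + 1) = q + 1 from by omega]
      calc (2 : ZMod q) * (((t + 1 : ℕ) : ZMod q) * (i0 - z))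
          = ((2 * (t + 1) : ℕ) : ZMod q) * (i0 - z) := by push_cast; ring
        _ = ((q + 1 : ℕ) : ZMod q) * (i0 - z) := by rw [he]
        _ = (i0 - z) := by push_cast [ZMod.natCast_self]; ring
    set c : ZMod q := ((t + 1 : ℕ) : ZMod q) * (i0 - z) with hc
    have hval : ((c.val : ℕ) : ZMod q) = c := by
      rw [ZMod.natCast_val, ZMod.cast_id]
    have h3 := all c.val
    rw [show i0 - 2 * ((c.val : ℕ) : ZMod q) = z from by rw [hval]; linear_combination -h2c] at h3
    exact h3
  exact C.t1 x 0 1 (by ring) (allz 0) (allz 1)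

lemma propP (x : V) (i0 : ZMod q) (h0 : A x (v i0)) :
    ∃ ℓ : ZMod q, (∀ j, A (v j) x ↔ j = ℓ - 1) ∧ (∀ j, A x (v j) ↔ j = ℓ + 1) := by
  obtain ⟨i, hO, hI⟩ := C.descent x i0 h0
  have L2a : ∀ j, A x (v j) → j = i ∨ j = i - 1 ∨ j = i - 3 := by
    intro j hj
    rcases C.hp' (v (i - 2)) x (v j) (v (j - 1)) hI hj (C.harc' _ _ (by ring)) with
      hadj | hadj | hadj
    · rcases C.adj_vv _ _ hadj with hh | hh
      · right; left; linear_combination hh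
      · right; right; linear_combination -hh
    · rcases C.adj_vv _ _ hadj with hh | hh
      · left; linear_combination hh
      · exfalso
        have hji : j = i - 2 := by linear_combination -hh
        rw [hji] at hj
        exact C.hasym _ _ hj hI
    · exfalso
      rcases hadj.2 with h | h
      · exact C.t1 x (j - 1) j (by ring) h hj
      · exact C.t3 x (j - 1) j (by ring) h hj
  have hOonly : ∀ j, A x (v j) → j = i := by
    intro j hj
    rcases L2a j hj with h | h | h
    · exact h
    · exfalso
      rw [h] at hj
      exact C.t1 x (i - 1) i (by ring) hj hO
    · exfalso
      rw [h] at hj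
      -- hj : A x (v (i - 3))
      rcases C.hp' (v (i - 5)) (v (i - 4)) (v (i - 3)) x (C.harc' _ _ (by ring))
          (C.harc' _ _ (by ring)) hj with hadj | hadj | hadj
      · rcases C.adj_vv _ _ hadj with hh | hh
        · exact C.nz1 (by linear_combination hh)
        · exact C.nz3 (by linear_combination -hh)
      · -- Adj (v (i-5)) x
        rcases hadj.2 with hh | hh
        · -- A (v (i-5)) x
          rcases C.hp' (v (i - 6)) (v (i - 5)) x (v (i - 2)) (C.harc' _ _ (by ring)) hh hI with
            h2 | h2 | h2
          · rcases h2.2 with h3 | h3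
            · exact C.t2 x (i - 6) (i - 5) (by ring) h3 hh
            · rcases L2a (i - 6) h3 with h4 | h4 | h4
              · exact C.nz6 (by linear_combination -h4)
              · exact C.nz5 (by linear_combination -h4)
              · exact C.nz3 (by linear_combination -h4)
          · rcases C.adj_vv _ _ h2 with h3 | h3
            · exact C.nz3 (by linear_combination h3)
            · exact C.nz5 (by linear_combination -h3)
          · rcases C.adj_vv _ _ h2 with h3 | h3
            · exact C.nz2 (by linear_combination h3)
            · exact C.nz4 (by linear_combination -h3)
        · -- A x (v (i-5))
          rcases L2a (i - 5) hh with h4 | h4 | h4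
          · exact C.nz5 (by linear_combination -h4)
          · exact C.nz4 (by linear_combination -h4)
          · exact C.nz2 (by linear_combination -h4)
      · -- Adj (v (i-4)) x
        rcases hadj.2 with hh | hh
        · exact C.t3 x (i - 4) (i - 3) (by ring) hh hj
        · exact C.t1 x (i - 4) (i - 3) (by ring) hh hj
  have hIonly : ∀ j, A (v j) x → j = i - 2 := by
    intro j hj
    by_contra hne
    rcases C.hp' (v (i - 3)) (v (i - 2)) x (v j) (C.harc' _ _ (by ring)) hI hj with
      hadj | hadj | hadj
    · rcases hadj.2 with hh | hh
      · exact C.t2 x (i - 3) (i - 2) (by ring) hh hI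
      · have := hOonly _ hh
        exact C.nz3 (by linear_combination -this)
    · rcases C.adj_vv _ _ hadj with hh | hh
      · exact hne (by linear_combination hh)
      · have hj4 : A (v (i - 4)) x := by
          have hji : j = i - 4 := by linear_combination -hh
          rwa [hji] at hj
        rcases C.hp' (v (i - 5)) (v (i - 4)) x (v (i - 2)) (C.harc' _ _ (by ring)) hj4 hI with
          h2 | h2 | h2
        · rcases h2.2 with h3 | h3
          · exact C.t2 x (i - 5) (i - 4) (by ring) h3 hj4
          · have := hOonly _ h3
            exact C.nz5 (by linear_combination -this)
        · rcases C.adj_vv _ _ h2 with h3 | h3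
          · exact C.nz2 (by linear_combination h3)
          · exact C.nz4 (by linear_combination -h3)
        · rcases C.adj_vv _ _ h2 with h3 | h3
          · exact C.nz1 (by linear_combination h3)
          · exact C.nz3 (by linear_combination -h3)
    · rcases C.adj_vv _ _ hadj with hh | hh
      · have hj' : A (v (i - 1)) x := by
          have hji : j = i - 1 := by linear_combination hh
          rwa [hji] at hj
        exact C.t3 x (i - 1) i (by ring) hj' hO
      · have hj3 : A (v (i - 3)) x := by
          have hji : j = i - 3 := by linear_combination -hh
          rwa [hji] at hj
        exact C.t2 x (i - 3) (i - 2) (by ring) hj3 hI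
  refine ⟨i - 1, fun j => ⟨fun hj => by rw [hIonly j hj]; ring, fun hj => ?_⟩,
    fun j => ⟨fun hj => by rw [hOonly j hj]; ring, fun hj => ?_⟩⟩
  · rw [hj, show i - 1 - 1 = i - 2 from by ring]
    exact hI
  · rw [hj, show i - 1 + 1 = i from by ring]
    exact hO

lemma outarc (x : V) : ∃ j, A x (v j) := by
  have key : ∀ z y : V, A z y → (∃ j, A y (v j)) → ∃ j, A z (v j) := by
    rintro z y hzy ⟨j0, hy0⟩
    by_contra hno
    push_neg at hno
    obtain ⟨ℓ, hIw, hOw⟩ := C.propP y j0 hy0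
    have hwI : A (v (ℓ - 1)) y := (hIw (ℓ - 1)).mpr rfl
    have hwO : A y (v (ℓ + 1)) := (hOw (ℓ + 1)).mpr rfl
    have nw : ∀ j, j ≠ ℓ - 1 → j ≠ ℓ + 1 → ¬ (underlying A).Adj y (v j) := by
      intro j h1 h2 hadj
      rcases hadj.2 with h | h
      · exact h2 ((hOw j).mp h)
      · exact h1 ((hIw j).mp h)
    have ncons : ∀ p r : ZMod q, r = p + 1 → A (v p) z → A (v r) z → False :=
      fun p r h hp hr => C.t2 z p r h hp hr
    have ipl : ∀ p r : ZMod q, A (v p) z → A (v r) z → r ≠ p →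
        A (v (p - 1)) z ∨ r = p - 2 := by
      intro p r hp hr hne
      rcases C.hp' (v (p - 1)) (v p) z (v r) (C.harc' _ _ (by ring)) hp hr with
        hadj | hadj | hadj
      · rcases hadj.2 with h | h
        · left; exact h
        · exact absurd h (hno _)
      · rcases C.adj_vv _ _ hadj with h | h
        · exact absurd (by linear_combination h) hne
        · right; linear_combination -h
      · rcases C.adj_vv _ _ hadj with h | h
        · exact (ncons p r h hp hr).elim
        · exact (ncons r p h hr hp).elim
    have P1 : A (v ℓ) z ∨ A (v (ℓ + 1)) z := by
      rcases C.hp' z y (v (ℓ + 1)) (v ℓ) hzy hwO (C.harc' _ _ rfl) with hadj | hadj | hadj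
      · rcases hadj.2 with h | h
        · exact absurd h (hno _)
        · right; exact h
      · rcases hadj.2 with h | h
        · exact absurd h (hno _)
        · left; exact h
      · exact absurd hadj (nw ℓ (fun h => C.nz1 (by linear_combination h))
          (fun h => C.nz1 (by linear_combination -h)))
    have P2 : A (v (ℓ - 2)) z ∨ A (v (ℓ - 1)) z := by
      rcases C.hp' (v (ℓ - 2)) (v (ℓ - 1)) y z (C.harc' _ _ (by ring)) hwI hzy with
        hadj | hadj | hadj
      · exact absurd hadj.symm (nw (ℓ - 2) (fun h => C.nz1 (by linear_combination -h))
          (fun h => C.nz3 (by linear_combination -h)))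
      · rcases hadj.2 with h | h
        · left; exact h
        · exact absurd h (hno _)
      · rcases hadj.2 with h | h
        · right; exact h
        · exact absurd h (hno _)
    rcases P1 with hk | hk <;> rcases P2 with hm | hm
    · rcases ipl (ℓ - 2) ℓ hm hk (fun h => C.nz2 (by linear_combination h)) with h | h
      · exact ncons (ℓ - 3) (ℓ - 2) (by ring)
          (by rwa [show ℓ - 2 - 1 = ℓ - 3 from by ring] at h) hm
      · exact C.nz4 (by linear_combination h)
    · exact ncons (ℓ - 1) ℓ (by ring) hm hk
    · rcases ipl (ℓ + 1) (ℓ - 2) hk hm (fun h => C.nz3 (by linear_combination -h)) with h | h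
      · exact ncons ℓ (ℓ + 1) rfl (by rwa [show ℓ + 1 - 1 = ℓ from by ring] at h) hk
      · exact C.nz1 (by linear_combination -h)
    · rcases ipl (ℓ - 1) (ℓ + 1) hm hk (fun h => C.nz2 (by linear_combination h)) with h | h
      · have hm2 : A (v (ℓ - 2)) z := by
          rwa [show ℓ - 1 - 1 = ℓ - 2 from by ring] at h
        rcases ipl (ℓ + 1) (ℓ - 2) hk hm2 (fun h2 => C.nz3 (by linear_combination -h2)) with
          h2 | h2
        · exact ncons ℓ (ℓ + 1) rfl (by rwa [show ℓ + 1 - 1 = ℓ from by ring] at h2) hk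
        · exact C.nz1 (by linear_combination -h2)
      · exact C.nz4 (by linear_combination h)
  refine Relation.ReflTransGen.head_induction_on (C.hstrong x (v 0)) ⟨0 + 1, C.harc 0⟩ ?_
  intro a c hac _ ih
  exact key a c hac ih

lemma main : ∃ φ : V → ZMod q, (∀ i, φ (v i) = i) ∧ ∀ x y, A x y ↔ φ y = φ x + 1 := by
  have hstruct : ∀ x : V, ∃ ℓ : ZMod q,
      (∀ j, A (v j) x ↔ j = ℓ - 1) ∧ (∀ j, A x (v j) ↔ j = ℓ + 1) := by
    intro x
    obtain ⟨j, hj⟩ := C.outarc x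
    exact C.propP x j hj
  choose φ hIx hOx using hstruct
  have hφv : ∀ i, φ (v i) = i := by
    intro i
    have h := (hOx (v i) (i + 1)).mp (C.harc i)
    exact (add_right_cancel h.symm)
  have naA : ∀ (x : V) (j : ZMod q), (underlying A).Adj x (v j) →
      j = φ x - 1 ∨ j = φ x + 1 := by
    intro x j h
    rcases h.2 with h | h
    · right; exact (hOx x j).mp h
    · left; exact (hIx x j).mp h
  have harcO : ∀ x, A x (v (φ x + 1)) := fun x => (hOx x _).mpr rfl
  have harcI : ∀ x, A (v (φ x - 1)) x := fun x => (hIx x _).mpr rfl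
  have forward : ∀ x y, A x y → φ y = φ x + 1 := by
    intro x y hxy
    have hα : φ y = φ x ∨ φ y = φ x + 1 ∨ φ y = φ x + 2 ∨ φ y = φ x - 1 ∨ φ y = φ x - 2 := by
      rcases C.hp' (v (φ x - 1)) x y (v (φ y - 1)) (harcI x) hxy (harcI y) with
        hadj | hadj | hadj
      · rcases naA y (φ x - 1) hadj.symm with h | h
        · left; linear_combination -h
        · right; right; right; right; linear_combination -h
      · rcases C.adj_vv _ _ hadj with h | h
        · right; left; linear_combination h
        · right; right; right; left; linear_combination -h
      · rcases naA x (φ y - 1) hadj with h | h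
        · left; linear_combination h
        · right; right; left; linear_combination h
    have hβ : φ y = φ x ∨ φ y = φ x + 1 ∨ φ y = φ x + 2 ∨ φ y = φ x + 3 := by
      rcases C.hp' (v (φ y - 2)) (v (φ y - 1)) y x (C.harc' _ _ (by ring)) (harcI y) hxy with
        hadj | hadj | hadj
      · rcases naA y (φ y - 2) hadj.symm with h | h
        · exact absurd (by linear_combination -h) C.nz1
        · exact absurd (by linear_combination -h) C.nz3
      · rcases naA x (φ y - 2) hadj.symm with h | h
        · right; left; linear_combination h
        · right; right; right; linear_combination h
      · rcases naA x (φ y - 1) hadj.symm with h | h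
        · left; linear_combination h
        · right; right; left; linear_combination h
    have hm : φ y = φ x ∨ φ y = φ x + 1 ∨ φ y = φ x + 2 := by
      rcases hα with h | h | h | h | h
      · exact Or.inl h
      · exact Or.inr (Or.inl h)
      · exact Or.inr (Or.inr h)
      · exfalso
        rcases hβ with h2 | h2 | h2 | h2
        · exact C.nz1 (by linear_combination h - h2)
        · exact C.nz2 (by linear_combination h - h2)
        · exact C.nz3 (by linear_combination h - h2)
        · exact C.nz4 (by linear_combination h - h2)
      · exfalso
        rcases hβ with h2 | h2 | h2 | h2
        · exact C.nz2 (by linear_combination h - h2)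
        · exact C.nz3 (by linear_combination h - h2)
        · exact C.nz4 (by linear_combination h - h2)
        · exact C.nz5 (by linear_combination h - h2)
    rcases hm with h | h | h
    · exfalso
      have hyO : A y (v (φ x + 1)) := by
        have h2 := harcO y
        rwa [show φ y + 1 = φ x + 1 from by rw [h]] at h2
      exact C.hTT3 ⟨x, y, v (φ x + 1), hxy, hyO, harcO x⟩
    · exact h
    · exfalso
      have hyI : A (v (φ x + 1)) y := by
        have h2 := harcI y
        rwa [show φ y - 1 = φ x + 1 from by rw [h]; ring] at h2
      exact C.hTT3 ⟨x, v (φ x + 1), y, harcO x, hyI, hxy⟩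
  refine ⟨φ, hφv, fun x y => ⟨forward x y, ?_⟩⟩
  intro h
  have hyO : A y (v (φ x + 2)) := by
    have h2 := harcO y
    rwa [show φ y + 1 = φ x + 2 from by rw [h]; ring] at h2
  rcases C.hp' x (v (φ x + 1)) (v (φ x + 2)) y (harcO x) (C.harc' _ _ (by ring)) hyO with
    hadj | hadj | hadj
  · exfalso
    rcases naA x (φ x + 2) hadj with h2 | h2
    · exact C.nz3 (by linear_combination h2)
    · exact C.nz1 (by linear_combination h2)
  · rcases hadj.2 with h2 | h2
    · exact h2
    · exfalso
      have h3 := forward y x h2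
      rw [h] at h3
      exact C.nz2 (by linear_combination -h3)
  · exfalso
    rcases naA y (φ x + 1) hadj.symm with h2 | h2
    · rw [h] at h2
      exact C.nz1 (by linear_combination h2)
    · rw [h] at h2
      exact C.nz1 (by linear_combination -h2)

end Ctx

/-- The explicit 3-coloring of `ZMod q`. -/
def gcol (q : ℕ) (i : ZMod q) : Fin 3 :=
  if i.val = q - 1 then 2 else if i.val % 2 = 0 then 0 else 1

lemma gcol_ne {q : ℕ} (hq7 : 7 ≤ q) (j : ZMod q) : gcol q j ≠ gcol q (j + 1) := by
  haveI : NeZero q := ⟨by omega⟩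
  haveI : Fact (1 < q) := ⟨by omega⟩
  have hjlt : j.val < q := ZMod.val_lt j
  have hval : (j + 1).val = (j.val + 1) % q := by
    rw [ZMod.val_add]
    congr 1
    rw [ZMod.val_one]
  unfold gcol
  by_cases h : j.val = q - 1
  · have h0 : (j + 1).val = 0 := by
      rw [hval, h, show q - 1 + 1 = q from by omega, Nat.mod_self]
    rw [if_pos h, h0, if_neg (by omega), if_pos (by norm_num)]
    decide
  · have h1 : (j + 1).val = j.val + 1 := by rw [hval, Nat.mod_eq_of_lt (by omega)]
    rw [if_neg h, h1]
    by_cases h2 : j.val + 1 = q - 1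
    · rw [if_pos h2]
      split_ifs <;> decide
    · rw [if_neg h2]
      by_cases hp : j.val % 2 = 0
      · rw [if_pos hp, if_neg (by omega)]
        decide
      · rw [if_neg hp, if_pos (by omega)]
        decide

lemma chrom_eq_three {q : ℕ} (hq7 : 7 ≤ q) (hodd : Odd q)
    (v : ZMod q → V) (hcyc : ∀ i : ZMod q, (underlying A).Adj (v i) (v (i + 1)))
    (φ : V → ZMod q) (hA : ∀ x y, A x y ↔ φ y = φ x + 1) :
    (underlying A).chromaticNumber = 3 := by
  haveI : NeZero q := ⟨by omega⟩
  have col3 : (underlying A).Colorable 3 := by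
    refine ⟨SimpleGraph.Coloring.mk (fun x => gcol q (φ x)) ?_⟩
    intro x y hadj
    show gcol q (φ x) ≠ gcol q (φ y)
    rcases hadj.2 with h | h
    · rw [(hA x y).mp h]
      exact gcol_ne hq7 (φ x)
    · rw [(hA y x).mp h]
      exact (gcol_ne hq7 (φ y)).symm
  have nc2 : ¬ (underlying A).Colorable 2 := by
    rintro ⟨c⟩
    have flip : ∀ a b : Fin 2, a ≠ b → b = a + 1 := by decide
    have add11 : ∀ a : Fin 2, a + 1 + 1 = a := by decide
    have selfne : ∀ a : Fin 2, a ≠ a + 1 := by decide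
    have hnev : ¬ Even q := by
      intro h
      rw [Nat.even_iff] at h
      have := Nat.odd_iff.mp hodd
      omega
    have walk : ∀ n : ℕ, c (v ((n : ℕ) : ZMod q)) =
        if Even n then c (v 0) else c (v 0) + 1 := by
      intro n
      induction n with
      | zero => simp
      | succ n ih =>
        have hadj := hcyc ((n : ℕ) : ZMod q)
        have hne := c.valid hadj
        have hstep := flip _ _ hne
        rw [ih] at hstep
        have hcast : ((n + 1 : ℕ) : ZMod q) = ((n : ℕ) : ZMod q) + 1 := by push_cast; ring
        rw [hcast, hstep]
        by_cases he : Even n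
        · rw [if_pos he, if_neg (by simp [Nat.even_add_one, he])]
        · rw [if_neg he, if_pos (by simp [Nat.even_add_one, he])]
          exact add11 _
    have hq := walk q
    rw [ZMod.natCast_self, if_neg hnev] at hq
    exact selfne _ hq
  have hle : (underlying A).chromaticNumber ≤ 3 := by exact_mod_cast col3.chromaticNumber_le
  have hgt : (2 : ℕ∞) < (underlying A).chromaticNumber := by
    by_contra h
    push_neg at h
    exact nc2 (SimpleGraph.chromaticNumber_le_iff_colorable.mp (by exact_mod_cast h))
  refine le_antisymm hle ?_
  calc (3 : ℕ∞) = 2 + 1 := by norm_num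
    _ ≤ _ := Order.add_one_le_of_lt hgt

end Aux

theorem stmt16 {V : Type*} [Fintype V] (A : V → V → Prop)
    (hasym : ∀ x y, A x y → ¬ A y x)
    (hstrong : ∀ x y : V, Relation.ReflTransGen A x y)
    (hTT3 : ¬ ∃ u v w : V, A u v ∧ A v w ∧ A u w)
    (hP21 : ¬ ∃ a b c d : V, A a b ∧ A b c ∧ A d c ∧
      ¬ (underlying A).Adj a c ∧ ¬ (underlying A).Adj a d ∧
      ¬ (underlying A).Adj b d)
    (q : ℕ) (hq7 : 7 ≤ q) (hodd : Odd q) (v : ZMod q → V)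
    (hinj : Function.Injective v)
    (hcyc : ∀ i : ZMod q, (underlying A).Adj (v i) (v (i + 1)))
    (hind : ∀ i j : ZMod q, j ≠ i + 1 → i ≠ j + 1 → i ≠ j →
      ¬ (underlying A).Adj (v i) (v j)) :
    (∃ (φ : V → ZMod q) (e : ZMod q ≃ ZMod q),
      (∀ i, φ (v i) = e i) ∧ (∀ x y : V, A x y ↔ φ y = φ x + 1)) ∧
    (underlying A).chromaticNumber = 3 := by
  classical
  haveI : NeZero q := ⟨by omega⟩
  have nzn : ∀ k : ℕ, 0 < k → k < 7 → ((k : ℕ) : ZMod q) ≠ 0 := by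
    intro k h0 h7 h
    have hd := (ZMod.natCast_eq_zero_iff k q).mp h
    have := Nat.le_of_dvd h0 hd
    omega
  have nz1 : (1 : ZMod q) ≠ 0 := by exact_mod_cast nzn 1 (by norm_num) (by norm_num)
  have nz2 : (2 : ZMod q) ≠ 0 := by exact_mod_cast nzn 2 (by norm_num) (by norm_num)
  have nz3 : (3 : ZMod q) ≠ 0 := by exact_mod_cast nzn 3 (by norm_num) (by norm_num)
  have nz4 : (4 : ZMod q) ≠ 0 := by exact_mod_cast nzn 4 (by norm_num) (by norm_num)
  have hp' : ∀ a b c d : V, A a b → A b c → A d c →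
      (underlying A).Adj a c ∨ (underlying A).Adj a d ∨ (underlying A).Adj b d := by
    intro a b c d h1 h2 h3
    by_contra h
    push_neg at h
    exact hP21 ⟨a, b, c, d, h1, h2, h3, h.1, h.2.1, h.2.2⟩
  have adj_vv : ∀ i j : ZMod q, (underlying A).Adj (v i) (v j) → j = i + 1 ∨ i = j + 1 := by
    intro i j h
    by_contra hc
    push_neg at hc
    exact hind i j hc.1 hc.2 (fun e => h.ne (congrArg v e)) h
  have hedge : ∀ i : ZMod q, A (v i) (v (i + 1)) ∨ A (v (i + 1)) (v i) := fun i => (hcyc i).2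
  have step_pos : ∀ k : ZMod q, A (v k) (v (k + 1)) → A (v (k + 1)) (v (k + 2)) →
      A (v (k + 2)) (v (k + 3)) := by
    intro k h1 h2
    rcases hedge (k + 2) with h | h
    · rwa [show k + 2 + 1 = k + 3 from by ring] at h
    · exfalso
      rw [show k + 2 + 1 = k + 3 from by ring] at h
      rcases hp' _ _ _ _ h1 h2 h with hadj | hadj | hadj
      · rcases adj_vv _ _ hadj with hh | hh
        · exact nz1 (by linear_combination hh)
        · exact nz3 (by linear_combination -hh)
      · rcases adj_vv _ _ hadj with hh | hh
        · exact nz2 (by linear_combination hh)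
        · exact nz4 (by linear_combination -hh)
      · rcases adj_vv _ _ hadj with hh | hh
        · exact nz1 (by linear_combination hh)
        · exact nz3 (by linear_combination -hh)
  have step_neg : ∀ k : ZMod q, A (v (k + 2)) (v (k + 1)) → A (v (k + 1)) (v k) →
      A (v k) (v (k - 1)) := by
    intro k h1 h2
    rcases hedge (k - 1) with h | h
    · rw [show k - 1 + 1 = k from by ring] at h
      exfalso
      rcases hp' _ _ _ _ h1 h2 h with hadj | hadj | hadj
      · rcases adj_vv _ _ hadj with hh | hh
        · exact nz3 (by linear_combination -hh)
        · exact nz1 (by linear_combination hh)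
      · rcases adj_vv _ _ hadj with hh | hh
        · exact nz4 (by linear_combination -hh)
        · exact nz2 (by linear_combination hh)
      · rcases adj_vv _ _ hadj with hh | hh
        · exact nz3 (by linear_combination -hh)
        · exact nz1 (by linear_combination hh)
    · rwa [show k - 1 + 1 = k from by ring] at h
  have hex : ∃ k : ZMod q, (A (v k) (v (k + 1)) ↔ A (v (k + 1)) (v (k + 2))) := by
    by_contra hc
    push_neg at hc
    have hswap : ∀ k : ZMod q, A (v (k + 1)) (v (k + 2)) ↔ ¬ A (v k) (v (k + 1)) := by
      intro k
      have := hc k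
      tauto
    have hnev : ¬ Even q := by
      intro h
      rw [Nat.even_iff] at h
      have := Nat.odd_iff.mp hodd
      omega
    have walk : ∀ n : ℕ, (A (v ((n : ℕ) : ZMod q)) (v (((n : ℕ) : ZMod q) + 1)) ↔
        (if Even n then A (v 0) (v (0 + 1)) else ¬ A (v 0) (v (0 + 1)))) := by
      intro n
      induction n with
      | zero => simp
      | succ n ih =>
        have hs := hswap ((n : ℕ) : ZMod q)
        have hcast : ((n + 1 : ℕ) : ZMod q) = ((n : ℕ) : ZMod q) + 1 := by push_cast; ring
        rw [hcast, show ((n : ℕ) : ZMod q) + 1 + 1 = ((n : ℕ) : ZMod q) + 2 from by ring]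
        rw [hs]
        by_cases he : Even n
        · rw [if_neg (by simp [Nat.even_add_one, he])]
          rw [if_pos he] at ih
          tauto
        · rw [if_pos (by simp [Nat.even_add_one, he])]
          rw [if_neg he] at ih
          tauto
    have hq := walk q
    rw [ZMod.natCast_self, if_neg hnev] at hq
    tauto
  obtain ⟨k0, hk0⟩ := hex
  have chromof : ∀ φ : V → ZMod q, (∀ x y, A x y ↔ φ y = φ x + 1) →
      (underlying A).chromaticNumber = 3 :=
    fun φ hφ => chrom_eq_three A hq7 hodd v hcyc φ hφ
  by_cases hdir : A (v k0) (v (k0 + 1))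
  · -- forward directed cycle
    have h2 := hk0.mp hdir
    have up : ∀ n : ℕ, A (v (k0 + (n : ZMod q))) (v (k0 + (n : ZMod q) + 1)) ∧
        A (v (k0 + (n : ZMod q) + 1)) (v (k0 + (n : ZMod q) + 2)) := by
      intro n
      induction n with
      | zero => exact ⟨by simpa using hdir, by simpa using h2⟩
      | succ n ih =>
        have h3 := step_pos (k0 + (n : ZMod q)) ih.1 ih.2
        have e1 : k0 + ((n + 1 : ℕ) : ZMod q) = k0 + (n : ZMod q) + 1 := by push_cast; ring
        constructor
        · rw [e1, show k0 + (n : ZMod q) + 1 + 1 = k0 + (n : ZMod q) + 2 from by ring]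
          exact ih.2
        · rw [e1, show k0 + (n : ZMod q) + 1 + 1 = k0 + (n : ZMod q) + 2 from by ring,
            show k0 + (n : ZMod q) + 1 + 2 = k0 + (n : ZMod q) + 3 from by ring]
          exact h3
    have hall : ∀ i : ZMod q, A (v i) (v (i + 1)) := by
      intro i
      have h3 := (up ((i - k0).val)).1
      rw [show k0 + (((i - k0).val : ℕ) : ZMod q) = i from by
        rw [ZMod.natCast_val, ZMod.cast_id]; ring] at h3
      exact h3
    have C : Ctx A v :=
      ⟨hasym, hstrong, hTT3, hP21, hq7, hodd, hinj, hall, hind⟩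
    obtain ⟨φ, hφ1, hφ2⟩ := C.main
    exact ⟨⟨φ, Equiv.refl _, fun i => by simpa using hφ1 i, hφ2⟩, chromof φ hφ2⟩
  · -- backward directed cycle
    have h1 : A (v (k0 + 1)) (v k0) := (hedge k0).resolve_left hdir
    have h2' : ¬ A (v (k0 + 1)) (v (k0 + 2)) := fun h => hdir (hk0.mpr h)
    have h2 : A (v (k0 + 2)) (v (k0 + 1)) := by
      have := hedge (k0 + 1)
      rw [show k0 + 1 + 1 = k0 + 2 from by ring] at this
      exact this.resolve_left h2'
    have down : ∀ n : ℕ, A (v (k0 + 2 - (n : ZMod q))) (v (k0 + 1 - (n : ZMod q))) ∧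
        A (v (k0 + 1 - (n : ZMod q))) (v (k0 - (n : ZMod q))) := by
      intro n
      induction n with
      | zero => constructor <;> simp only [Nat.cast_zero, sub_zero] <;> [exact h2; exact h1]
      | succ n ih =>
        have h3 := step_neg (k0 - (n : ZMod q))
          (by rw [show k0 - (n : ZMod q) + 2 = k0 + 2 - (n : ZMod q) from by ring,
            show k0 - (n : ZMod q) + 1 = k0 + 1 - (n : ZMod q) from by ring]; exact ih.1)
          (by rw [show k0 - (n : ZMod q) + 1 = k0 + 1 - (n : ZMod q) from by ring]; exact ih.2)
        have e1 : k0 + 2 - ((n + 1 : ℕ) : ZMod q) = k0 + 1 - (n : ZMod q) := by push_cast; ring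
        have e2 : k0 + 1 - ((n + 1 : ℕ) : ZMod q) = k0 - (n : ZMod q) := by push_cast; ring
        have e3 : k0 - ((n + 1 : ℕ) : ZMod q) = k0 - (n : ZMod q) - 1 := by push_cast; ring
        constructor
        · rw [e1, e2]
          exact ih.2
        · rw [e2, e3]
          exact h3
    have hall' : ∀ i : ZMod q, A (v (i + 1)) (v i) := by
      intro i
      have h3 := (down ((k0 - i).val)).2
      rw [ZMod.natCast_val, ZMod.cast_id] at h3
      rw [show k0 + 1 - (k0 - i) = i + 1 from by ring,
        show k0 - (k0 - i) = i from by ring] at h3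
      exact h3
    have Cw : Ctx A (fun i : ZMod q => v (-i)) := by
      refine ⟨hasym, hstrong, hTT3, hP21, hq7, hodd, ?_, ?_, ?_⟩
      · intro a b h
        have := hinj h
        exact neg_injective this
      · intro i
        show A (v (-i)) (v (-(i + 1)))
        have h3 := hall' (-(i + 1))
        rwa [show -(i + 1) + 1 = -i from by ring] at h3
      · intro i j hj hi hij
        show ¬ (underlying A).Adj (v (-i)) (v (-j))
        apply hind
        · intro h
          exact hi (by linear_combination h)
        · intro h
          exact hj (by linear_combination h)
        · intro h
          exact hij (neg_injective h)
    obtain ⟨φ, hφ1, hφ2⟩ := Cw.main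
    refine ⟨⟨φ, Equiv.neg (ZMod q), fun i => ?_, hφ2⟩, chromof φ hφ2⟩
    have h3 := hφ1 (-i)
    simp only [neg_neg] at h3
    simpa using h3
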